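/- The iterated integral (1/(8π)) ∫_{-∞}^{∞} (∫_{-∞}^{∞} u_1(x,t) dt) dx equals 1, where u_1(x,t) = 4(1 - x^2 + t^2)/(1 + x^2 + t^2)^2. -/

import Mathlib

open MeasureTheory Real Filter

/-- `t / (t^2 + c) → 0` at `atTop` for `c > 0`. -/
lemma aux_tendsto_div (c : ℝ) (hc : 0 < c) :
    Tendsto (fun t : ℝ => t / (t ^ 2 + c)) atTop (nhds 0) := by
  have h1 : Tendsto (fun t : ℝ => t + c / t) atTop atTop :=
    tendsto_id.atTop_add (tendsto_const_nhds.div_atTop tendsto_id)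
  have h2 := h1.inv_tendsto_atTop
  refine h2.congr' ?_
  filter_upwards [eventually_gt_atTop (0 : ℝ)] with t ht
  have ht' : t ≠ 0 := ne_of_gt ht
  simp only [Pi.inv_apply]
  rw [show t + c / t = (t ^ 2 + c) / t by field_simp, inv_div]

/-- Inner integral. -/
lemma inner_integral (x : ℝ) :
    (∫ t : ℝ, 4 * (1 - x ^ 2 + t ^ 2) / (1 + x ^ 2 + t ^ 2) ^ 2)
      = 4 * π / (Real.sqrt (1 + x ^ 2)) ^ 3 := by
  set a : ℝ := Real.sqrt (1 + x ^ 2) with ha_def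
  have ha0 : 0 < a := Real.sqrt_pos.2 (by positivity)
  have ha2 : a ^ 2 = 1 + x ^ 2 := Real.sq_sqrt (by positivity)
  have hane : a ≠ 0 := ne_of_gt ha0
  set F : ℝ → ℝ := fun t => (4 / a ^ 3) * arctan (t / a) - 4 * x ^ 2 * t / (a ^ 2 * (t ^ 2 + a ^ 2))
  have hden : ∀ t : ℝ, t ^ 2 + a ^ 2 ≠ 0 := fun t => by positivity
  have hderiv : ∀ t : ℝ, HasDerivAt F (4 * (1 - x ^ 2 + t ^ 2) / (1 + x ^ 2 + t ^ 2) ^ 2) t := by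
    intro t
    have d1 : HasDerivAt (fun t : ℝ => arctan (t / a)) ((1 / (1 + (t / a) ^ 2)) * (1 / a)) t :=
      by have := (Real.hasDerivAt_arctan (t / a)).comp t ((hasDerivAt_id t).div_const a); exact this
    have d2 : HasDerivAt (fun t : ℝ => 4 * x ^ 2 * t / (a ^ 2 * (t ^ 2 + a ^ 2)))
        ((4 * x ^ 2 * (a ^ 2 * (t ^ 2 + a ^ 2)) - 4 * x ^ 2 * t * (a ^ 2 * (2 * t)))
          / (a ^ 2 * (t ^ 2 + a ^ 2)) ^ 2) t := by
      have du : HasDerivAt (fun t : ℝ => 4 * x ^ 2 * t) (4 * x ^ 2) t := by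
        simpa using (hasDerivAt_id t).const_mul (4 * x ^ 2)
      have dv : HasDerivAt (fun t : ℝ => a ^ 2 * (t ^ 2 + a ^ 2)) (a ^ 2 * (2 * t)) t := by
        have : HasDerivAt (fun t : ℝ => t ^ 2 + a ^ 2) (2 * t) t := by
          simpa using ((hasDerivAt_pow 2 t).add_const (a ^ 2))
        simpa using this.const_mul (a ^ 2)
      exact du.div dv (by positivity)
    have := ((d1.const_mul (4 / a ^ 3)).sub d2)
    refine this.congr_deriv (Eq.symm ?_)
    have hx2 : x ^ 2 = a ^ 2 - 1 := by linarith [ha2]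
    rw [hx2]
    have h1 : 1 + (t / a) ^ 2 ≠ 0 := by positivity
    have h0 : 1 + (a ^ 2 - 1) + t ^ 2 ≠ 0 := ne_of_gt (by nlinarith [sq_nonneg t, mul_pos ha0 ha0])
    field_simp
    ring
  have hint : Integrable (fun t : ℝ => 4 * (1 - x ^ 2 + t ^ 2) / (1 + x ^ 2 + t ^ 2) ^ 2) := by
    have hb : ∀ t : ℝ, ‖4 * (1 - x ^ 2 + t ^ 2) / (1 + x ^ 2 + t ^ 2) ^ 2‖ ≤ 4 * (1 + t ^ 2)⁻¹ := by
      intro t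
      have h1 : (0:ℝ) < 1 + x ^ 2 + t ^ 2 := by positivity
      have h2 : |1 - x ^ 2 + t ^ 2| ≤ 1 + x ^ 2 + t ^ 2 := by
        rw [abs_le]; constructor <;> nlinarith
      have h3 : (0:ℝ) < 1 + t ^ 2 := by positivity
      rw [Real.norm_eq_abs, abs_div, abs_of_pos (by positivity : (0:ℝ) < (1 + x ^ 2 + t ^ 2) ^ 2),
        abs_mul, abs_of_nonneg (by norm_num : (0:ℝ) ≤ 4)]
      rw [div_le_iff₀ (by positivity),
        show 4 * (1 + t ^ 2)⁻¹ * (1 + x ^ 2 + t ^ 2) ^ 2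
          = 4 * (1 + x ^ 2 + t ^ 2) ^ 2 / (1 + t ^ 2) by field_simp <;> ring,
        le_div_iff₀ h3]
      have h4 : 1 + t ^ 2 ≤ 1 + x ^ 2 + t ^ 2 := by nlinarith
      nlinarith [abs_nonneg (1 - x ^ 2 + t ^ 2), sq_nonneg x]
    have hcont : Continuous (fun t : ℝ => 4 * (1 - x ^ 2 + t ^ 2) / (1 + x ^ 2 + t ^ 2) ^ 2) := by
      apply Continuous.div (by continuity) (by continuity)
      intro t; positivity
    refine (integrable_inv_one_add_sq.const_mul 4).mono hcont.aestronglyMeasurable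
      (Filter.Eventually.of_forall fun t => ?_)
    rw [Real.norm_eq_abs (4 * (1 + t ^ 2)⁻¹), abs_of_pos (by positivity)]
    exact hb t
  have htop : Tendsto F atTop (nhds ((4 / a ^ 3) * (π / 2))) := by
    have h1 : Tendsto (fun t : ℝ => t / a) atTop atTop := tendsto_id.atTop_div_const ha0
    have h2 : Tendsto (fun t : ℝ => arctan (t / a)) atTop (nhds (π / 2)) :=
      (Real.tendsto_arctan_atTop.mono_right nhdsWithin_le_nhds).comp h1
    have h3 : Tendsto (fun t : ℝ => 4 * x ^ 2 * t / (a ^ 2 * (t ^ 2 + a ^ 2))) atTop (nhds 0) := by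
      have := (aux_tendsto_div (a ^ 2) (by positivity)).const_mul (4 * x ^ 2 / a ^ 2)
      rw [mul_zero] at this
      refine this.congr fun t => ?_
      field_simp
    simpa using (h2.const_mul (4 / a ^ 3)).sub h3
  have hodd : ∀ t : ℝ, F (-t) = -F t := by
    intro t
    simp only [F, neg_div, arctan_neg]
    ring
  have hbot : Tendsto F atBot (nhds (-((4 / a ^ 3) * (π / 2)))) := by
    have := (htop.comp tendsto_neg_atBot_atTop).neg
    refine this.congr fun t => ?_
    simp only [Function.comp_apply, hodd t, neg_neg]
  rw [integral_of_hasDerivAt_of_tendsto hderiv hint hbot htop]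
  ring

lemma outer_integral : (∫ x : ℝ, 4 * π / (Real.sqrt (1 + x ^ 2)) ^ 3) = 8 * π := by
  set G : ℝ → ℝ := fun x => 4 * π * x / Real.sqrt (1 + x ^ 2) with hG
  have hs : ∀ x : ℝ, (0:ℝ) < Real.sqrt (1 + x ^ 2) := fun x => Real.sqrt_pos.2 (by positivity)
  have hs2 : ∀ x : ℝ, (Real.sqrt (1 + x ^ 2)) ^ 2 = 1 + x ^ 2 := fun x => Real.sq_sqrt (by positivity)
  have hderiv : ∀ x : ℝ, HasDerivAt G (4 * π / (Real.sqrt (1 + x ^ 2)) ^ 3) x := by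
    intro x
    have ds : HasDerivAt (fun x : ℝ => Real.sqrt (1 + x ^ 2))
        (1 / (2 * Real.sqrt (1 + x ^ 2)) * (2 * x)) x := by
      have h1 : HasDerivAt (fun x : ℝ => 1 + x ^ 2) (2 * x) x := by
        simpa using ((hasDerivAt_pow 2 x).const_add 1)
      exact (Real.hasDerivAt_sqrt (by positivity)).comp x h1
    have du : HasDerivAt (fun x : ℝ => 4 * π * x) (4 * π) x := by
      simpa using (hasDerivAt_id x).const_mul (4 * π)
    have := du.div ds (ne_of_gt (hs x))
    refine this.congr_deriv (Eq.symm ?_)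
    have h2 := hs2 x
    have h3 := ne_of_gt (hs x)
    generalize hsx : Real.sqrt (1 + x ^ 2) = s at h2 h3 ⊢
    field_simp
    first
    | linear_combination (8 * π * s ^ 3) * h2
    | linear_combination (-(8 * π * s ^ 3)) * h2
    | nlinarith [h2]
  have hint : Integrable (fun x : ℝ => 4 * π / (Real.sqrt (1 + x ^ 2)) ^ 3) := by
    have hb : ∀ x : ℝ, ‖4 * π / (Real.sqrt (1 + x ^ 2)) ^ 3‖ ≤ ‖4 * π * (1 + x ^ 2)⁻¹‖ := by
      intro x
      have h1 : (1:ℝ) ≤ Real.sqrt (1 + x ^ 2) := by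
        have := Real.sqrt_le_sqrt (show (1:ℝ) ≤ 1 + x ^ 2 by nlinarith)
        simpa using this
      have h2 : 1 + x ^ 2 ≤ (Real.sqrt (1 + x ^ 2)) ^ 3 := by
        rw [pow_succ' (Real.sqrt (1 + x ^ 2)) 2]
        nlinarith [hs2 x, sq_nonneg x]
      rw [Real.norm_eq_abs, Real.norm_eq_abs, abs_of_pos (by positivity), abs_of_pos (by positivity)]
      rw [div_le_iff₀ (by positivity : (0:ℝ) < (Real.sqrt (1 + x ^ 2)) ^ 3),
        show 4 * π * (1 + x ^ 2)⁻¹ * (Real.sqrt (1 + x ^ 2)) ^ 3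
          = 4 * π * (Real.sqrt (1 + x ^ 2)) ^ 3 / (1 + x ^ 2) by field_simp <;> ring,
        le_div_iff₀ (by positivity : (0:ℝ) < 1 + x ^ 2)]
      nlinarith [pi_pos]
    have hcont : Continuous (fun x : ℝ => 4 * π / (Real.sqrt (1 + x ^ 2)) ^ 3) := by
      apply Continuous.div continuous_const (by fun_prop)
      intro x; positivity
    exact ((integrable_inv_one_add_sq.const_mul (4 * π))).mono hcont.aestronglyMeasurable
      (Filter.Eventually.of_forall hb)
  have htop : Tendsto G atTop (nhds (4 * π)) := by
    have key : Tendsto (fun x : ℝ => x / Real.sqrt (1 + x ^ 2)) atTop (nhds 1) := by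
      have h1 : Tendsto (fun x : ℝ => Real.sqrt (1 + x⁻¹ ^ 2)) atTop (nhds 1) := by
        have hb0 : Tendsto (fun x : ℝ => x⁻¹ ^ 2) atTop (nhds 0) := by
          have := (tendsto_inv_atTop_zero (𝕜 := ℝ)).pow 2
          simpa using this
        have : Tendsto (fun x : ℝ => 1 + x⁻¹ ^ 2) atTop (nhds (1 + 0)) :=
          tendsto_const_nhds.add hb0
        rw [add_zero] at this
        have := (Real.continuous_sqrt.tendsto 1).comp this
        simpa [Function.comp_def] using this
      have h2 : Tendsto (fun x : ℝ => (Real.sqrt (1 + x⁻¹ ^ 2))⁻¹) atTop (nhds 1) := by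
        simpa using h1.inv₀ one_ne_zero
      refine h2.congr' ?_
      filter_upwards [eventually_gt_atTop (0 : ℝ)] with x hx
      have e1 : x ^ 2 * (1 + x⁻¹ ^ 2) = 1 + x ^ 2 := by
        field_simp
        ring
      have e2 : x * Real.sqrt (1 + x⁻¹ ^ 2) = Real.sqrt (1 + x ^ 2) := by
        calc x * Real.sqrt (1 + x⁻¹ ^ 2)
            = Real.sqrt (x ^ 2) * Real.sqrt (1 + x⁻¹ ^ 2) := by
              rw [Real.sqrt_sq hx.le]
          _ = Real.sqrt (x ^ 2 * (1 + x⁻¹ ^ 2)) := (Real.sqrt_mul (by positivity) _).symm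
          _ = Real.sqrt (1 + x ^ 2) := by rw [e1]
      have hA : (0:ℝ) < Real.sqrt (1 + x⁻¹ ^ 2) := by positivity
      rw [← e2]
      field_simp
    have := key.const_mul (4 * π)
    simpa [hG, mul_div_assoc] using this
  have hodd : ∀ x : ℝ, G (-x) = -G x := by
    intro x
    show 4 * π * (-x) / Real.sqrt (1 + (-x) ^ 2) = -(4 * π * x / Real.sqrt (1 + x ^ 2))
    rw [neg_sq]
    ring
  have hbot : Tendsto G atBot (nhds (-(4 * π))) := by
    have := (htop.comp tendsto_neg_atBot_atTop).neg
    refine this.congr fun x => ?_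
    simp only [Function.comp_apply, hodd x, neg_neg]
  rw [integral_of_hasDerivAt_of_tendsto hderiv hint hbot htop]
  ring

theorem stmt7 :
    (1 / (8 * π)) * ∫ x : ℝ, (∫ t : ℝ, 4 * (1 - x^2 + t^2) / (1 + x^2 + t^2)^2) = 1 := by
  have houter : (∫ x : ℝ, (∫ t : ℝ, 4 * (1 - x^2 + t^2) / (1 + x^2 + t^2)^2)) = 8 * π := by
    rw [show (∫ x : ℝ, (∫ t : ℝ, 4 * (1 - x^2 + t^2) / (1 + x^2 + t^2)^2))
        = ∫ x : ℝ, 4 * π / (Real.sqrt (1 + x ^ 2)) ^ 3 from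
      integral_congr_ae (Filter.Eventually.of_forall fun x => inner_integral x)]
    exact outer_integral
  rw [houter]
  field_simp [Real.pi_ne_zero]
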